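/- For all λ, μ ≥ 0, the total variation distance between the Poisson distribution with mean λ and the Poisson distribution with mean μ is at most |λ - μ|. -/

import Mathlib

/-- The Poisson probability mass function with mean `l`, at `j`. -/
noncomputable def poissonPMF (l : ℝ) (j : ℕ) : ℝ :=
  Real.exp (-l) * l ^ j / (Nat.factorial j)

lemma poissonPMF_hasSum {l : ℝ} (hl : 0 ≤ l) : HasSum (poissonPMF l) 1 := by
  have := ProbabilityTheory.poissonPMFRealSum ⟨l, hl⟩
  have he : poissonPMF l = fun n => ProbabilityTheory.poissonPMFReal ⟨l, hl⟩ n := by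
    funext n; simp [poissonPMF, ProbabilityTheory.poissonPMFReal]; rfl
  rw [he]; exact this

lemma poissonPMF_nonneg {l : ℝ} (hl : 0 ≤ l) (j : ℕ) : 0 ≤ poissonPMF l j := by
  unfold poissonPMF
  positivity

theorem stmt_9 (l m : ℝ) (hl : 0 ≤ l) (hm : 0 ≤ m) :
    (1 / 2) * ∑' j : ℕ, |poissonPMF l j - poissonPMF m j| ≤ |l - m| := by
  wlog h : l ≤ m generalizing l m
  · have := this m l hm hl (le_of_not_ge h)
    simpa [abs_sub_comm] using this
  set c : ℝ := Real.exp (-(m - l)) with hc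
  have hc0 : 0 < c := Real.exp_pos _
  have hc1 : c ≤ 1 := Real.exp_le_one_iff.mpr (by linarith)
  -- pointwise bound
  have key : ∀ j : ℕ, |poissonPMF l j - poissonPMF m j| ≤
      poissonPMF l j + poissonPMF m j - 2 * c * poissonPMF l j := by
    intro j
    have ha := poissonPMF_nonneg hl j
    have hcb : c * poissonPMF l j ≤ poissonPMF m j := by
      unfold poissonPMF
      rw [hc]
      have hfac : (0:ℝ) < (Nat.factorial j : ℝ) := by positivity
      have heq : Real.exp (-(m - l)) * (Real.exp (-l) * l ^ j / (Nat.factorial j : ℝ))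
          = Real.exp (-m) * l ^ j / (Nat.factorial j : ℝ) := by
        rw [show (-m : ℝ) = (-(m - l)) + (-l) by ring, Real.exp_add]; ring
      rw [heq]
      gcongr
    rw [abs_sub_le_iff]
    constructor <;> nlinarith
  -- summability
  have hsl := poissonPMF_hasSum hl
  have hsm := poissonPMF_hasSum hm
  have hsum3 : HasSum (fun j => poissonPMF l j + poissonPMF m j - 2 * c * poissonPMF l j)
      (1 + 1 - 2 * c * 1) := by
    exact (hsl.add hsm).sub ((hsl.mul_left (2*c)))
  have habs : Summable fun j => |poissonPMF l j - poissonPMF m j| := by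
    apply Summable.of_nonneg_of_le (fun j => abs_nonneg _) key hsum3.summable
  have hts : ∑' j, |poissonPMF l j - poissonPMF m j| ≤ 2 - 2 * c := by
    calc ∑' j, |poissonPMF l j - poissonPMF m j|
        ≤ ∑' j, (poissonPMF l j + poissonPMF m j - 2 * c * poissonPMF l j) :=
          Summable.tsum_le_tsum key habs hsum3.summable
      _ = 1 + 1 - 2 * c * 1 := hsum3.tsum_eq
      _ = 2 - 2 * c := by ring
  have hexp : 1 - (m - l) ≤ c := by
    have := Real.add_one_le_exp (-(m - l))
    linarith
  rw [abs_of_nonpos (by linarith)]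
  linarith
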